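/- arXiv:2306.08800 — 4 statements merged into one kernel-verified Lean document; each statement's English description precedes it below -/
import Mathlib

section
/- Let (X,d) be a dissimilarity space and δ > 0 be such that the graph G_δ is not connected. Then every connected component of G_δ is an mmodule of (X,d). -/
structure Dissim (X : Type*) where
  d : X → X → ℝ
  symm : ∀ x y, d x y = d y x
  nonneg : ∀ x y, 0 ≤ d x y
  self : ∀ x, d x x = 0

variable {X : Type*}

def Compatible (D : Dissim X) (lt : X → X → Prop) : Prop :=
  ∀ x y z : X, lt x y → lt y z → D.d x y ≤ D.d x z ∧ D.d y z ≤ D.d x z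

def IsCompatOrder (D : Dissim X) (lt : X → X → Prop) : Prop :=
  IsStrictTotalOrder X lt ∧ Compatible D lt

def Robinson (D : Dissim X) : Prop :=
  ∃ lt : X → X → Prop, IsCompatOrder D lt

def IsMmodule (D : Dissim X) (M : Set X) : Prop :=
  ∀ z ∉ M, ∀ x ∈ M, ∀ y ∈ M, D.d z x = D.d z y

def IsInterval (lt : X → X → Prop) (I : Set X) : Prop :=
  ∀ a b c : X, lt a b → lt b c → a ∈ I → c ∈ I → b ∈ I

def IsBlock (D : Dissim X) (Y : Set X) : Prop :=
  ∀ lt : X → X → Prop, IsCompatOrder D lt → IsInterval lt Y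

noncomputable def diam (D : Dissim X) (Y : Set X) : ℝ :=
  sSup (Set.image2 D.d Y Y)

def Gdelta (D : Dissim X) (δ : ℝ) : SimpleGraph X where
  Adj x y := x ≠ y ∧ D.d x y ≠ δ
  symm := by
    constructor
    rintro x y ⟨hxy, hd⟩
    exact ⟨hxy.symm, by rw [D.symm]; exact hd⟩
  loopless := by constructor; rintro x ⟨h, -⟩; exact h rfl

def Gle (D : Dissim X) (δ : ℝ) : SimpleGraph X where
  Adj x y := x ≠ y ∧ D.d x y ≤ δ
  symm := by
    constructor
    rintro x y ⟨hxy, hd⟩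
    exact ⟨hxy.symm, by rw [D.symm]; exact hd⟩
  loopless := by constructor; rintro x ⟨h, -⟩; exact h rfl

def Glt (D : Dissim X) (δ : ℝ) : SimpleGraph X where
  Adj x y := x ≠ y ∧ D.d x y < δ
  symm := by
    constructor
    rintro x y ⟨hxy, hd⟩
    exact ⟨hxy.symm, by rw [D.symm]; exact hd⟩
  loopless := by constructor; rintro x ⟨h, -⟩; exact h rfl

def IsCompOf {V : Type*} (G : SimpleGraph V) (C : Set V) : Prop :=
  ∃ x : V, C = {y | G.Reachable x y}

def MMax (D : Dissim X) : Set (Set X) :=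
  {M | IsMmodule D M ∧ M ≠ Set.univ ∧
    ∀ M' : Set X, IsMmodule D M' → M' ≠ Set.univ → M ⊆ M' → M = M'}

def IsPartition {α : Type*} (P : Set (Set α)) : Prop :=
  (∀ A ∈ P, A.Nonempty) ∧
  (∀ A ∈ P, ∀ B ∈ P, A ≠ B → Disjoint A B) ∧
  ⋃₀ P = Set.univ

def IsCopartition {α : Type*} (P : Set (Set α)) : Prop :=
  IsPartition ((fun M => Mᶜ) '' P)

def SimpleGraph.restrictTo {V : Type*} (G : SimpleGraph V) (S : Set V) : SimpleGraph V where
  Adj x y := x ∈ S ∧ y ∈ S ∧ G.Adj x y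
  symm := by constructor; rintro x y ⟨hx, hy, h⟩; exact ⟨hy, hx, h.symm⟩
  loopless := by constructor; rintro x ⟨-, -, h⟩; exact G.irrefl h

def ConnectedWithin {V : Type*} (G : SimpleGraph V) (S : Set V) : Prop :=
  S.Nonempty ∧ ∀ x ∈ S, ∀ y ∈ S, (G.restrictTo S).Reachable x y

def IsCompWithin {V : Type*} (G : SimpleGraph V) (S : Set V) (C : Set V) : Prop :=
  ∃ x ∈ S, C = {y | (G.restrictTo S).Reachable x y}

def IsStrictTotalOrderOn {α : Type*} (S : Set α) (lt : α → α → Prop) : Prop :=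
  (∀ x ∈ S, ¬ lt x x) ∧
  (∀ x ∈ S, ∀ y ∈ S, ∀ z ∈ S, lt x y → lt y z → lt x z) ∧
  (∀ x ∈ S, ∀ y ∈ S, x ≠ y → (lt x y ∨ lt y x) ∧ ¬ (lt x y ∧ lt y x))

def CompatibleOn (D : Dissim X) (S : Set X) (lt : X → X → Prop) : Prop :=
  ∀ x ∈ S, ∀ y ∈ S, ∀ z ∈ S, lt x y → lt y z → D.d x y ≤ D.d x z ∧ D.d y z ≤ D.d x z

def IsCompatOrderOn (D : Dissim X) (S : Set X) (lt : X → X → Prop) : Prop :=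
  IsStrictTotalOrderOn S lt ∧ CompatibleOn D S lt

def FlatOn (D : Dissim X) (S : Set X) : Prop :=
  ∃ lt : X → X → Prop, IsCompatOrderOn D S lt ∧ (∃ x ∈ S, ∃ y ∈ S, lt x y) ∧
    ∀ lt' : X → X → Prop, IsCompatOrderOn D S lt' →
      (∀ x ∈ S, ∀ y ∈ S, (lt' x y ↔ lt x y)) ∨ (∀ x ∈ S, ∀ y ∈ S, (lt' x y ↔ lt y x))

def Flat (D : Dissim X) : Prop :=
  ∃ lt : X → X → Prop, IsCompatOrder D lt ∧ (∃ x y : X, lt x y) ∧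
    ∀ lt' : X → X → Prop, IsCompatOrder D lt' →
      (∀ x y : X, lt' x y ↔ lt x y) ∨ (∀ x y : X, lt' x y ↔ lt y x)

def IsCopointAt (D : Dissim X) (p : X) (C : Set X) : Prop :=
  IsMmodule D C ∧ C.Nonempty ∧ p ∉ C ∧
  ∀ C' : Set X, IsMmodule D C' → p ∉ C' → C ⊆ C' → C = C'

def bigGraph (D : Dissim X) (δ : ℝ) (I : Set (Set X)) : SimpleGraph (Set X) where
  Adj C C' := C ∈ I ∧ C' ∈ I ∧ C ≠ C' ∧ ∃ x ∈ C, ∃ y ∈ C', δ < D.d x y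
  symm := by
    constructor
    rintro C C' ⟨hC, hC', hne, x, hx, y, hy, hd⟩
    exact ⟨hC', hC, hne.symm, y, hy, x, hx, by rw [D.symm]; exact hd⟩
  loopless := by constructor; rintro C ⟨-, -, hne, -⟩; exact hne rfl

/-- if G_δ is not connected, each of its connected components is an
mmodule. -/
theorem stmt3 [Fintype X] [Nonempty X] (D : Dissim X)
    (δ : ℝ) (hδ : 0 < δ)
    (hnc : ¬ (Gdelta D δ).Connected)
    (C : Set X) (hC : IsCompOf (Gdelta D δ) C) :
    IsMmodule D C := by
  obtain ⟨x₀, rfl⟩ := hC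
  intro z hz x hx y hy
  have key : ∀ w, (Gdelta D δ).Reachable x₀ w → D.d z w = δ := by
    intro w hw
    by_contra hne
    apply hz
    have hwz : w ≠ z := by rintro rfl; exact hz hw
    have : (Gdelta D δ).Adj w z := ⟨hwz, by rwa [D.symm]⟩
    exact hw.trans this.reachable
  rw [key x hx, key y hy]
end

section
/- Let (X,d) be a dissimilarity space and suppose there exists δ > 0 such that the graph G_δ is not connected. Then M_max = {X ∖ C : C is a connected component of G_δ}; in particular M_max is a copartition of X. -/
variable {X : Type*}

lemma d_of_not_reach (D : Dissim X) (δ : ℝ) {x y : X}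
    (h : ¬ (Gdelta D δ).Reachable x y) : D.d x y = δ := by
  by_contra hd
  rcases eq_or_ne x y with rfl | hne
  · exact h (SimpleGraph.Reachable.refl x)
  · exact h (SimpleGraph.Adj.reachable ⟨hne, hd⟩)

lemma d_comp (D : Dissim X) (δ : ℝ) {x a z : X}
    (ha : (Gdelta D δ).Reachable x a) (hz : ¬ (Gdelta D δ).Reachable x z) :
    D.d z a = δ :=
  d_of_not_reach D δ (fun h => hz (ha.trans h.symm))

lemma boundary {V : Type*} (G : SimpleGraph V) (M : Set V) :
    ∀ {z w : V}, G.Walk z w → z ∉ M → w ∈ M →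
      ∃ u, G.Reachable z u ∧ u ∉ M ∧ ∃ v ∈ M, G.Adj u v := by
  intro z w p
  induction p with
  | nil => intro hz hw; exact absurd hw hz
  | @cons a b c h p ih =>
    intro hz hw
    by_cases hb : b ∈ M
    · exact ⟨a, SimpleGraph.Reachable.refl a, hz, b, hb, h⟩
    · obtain ⟨u, hru, hu, v, hv, huv⟩ := ih hb hw
      exact ⟨u, h.reachable.trans hru, hu, v, hv, huv⟩

lemma compl_comp_mmodule (D : Dissim X) (δ : ℝ) (x : X) :
    IsMmodule D {y | (Gdelta D δ).Reachable x y}ᶜ := by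
  intro z hz a ha b hb
  simp only [Set.mem_compl_iff, Set.mem_setOf_eq, not_not] at hz ha hb
  have h1 : D.d a z = δ := d_comp D δ hz ha
  have h2 : D.d b z = δ := d_comp D δ hz hb
  rw [D.symm z a, D.symm z b, h1, h2]

lemma comp_mmodule (D : Dissim X) (δ : ℝ) (x : X) :
    IsMmodule D {y | (Gdelta D δ).Reachable x y} := by
  intro z hz a ha b hb
  simp only [Set.mem_setOf_eq] at hz ha hb
  rw [d_comp D δ ha hz, d_comp D δ hb hz]

lemma comp_union_mmodule (D : Dissim X) (δ : ℝ) (x y : X) :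
    IsMmodule D ({w | (Gdelta D δ).Reachable x w} ∪ {w | (Gdelta D δ).Reachable y w}) := by
  intro z hz a ha b hb
  simp only [Set.mem_union, Set.mem_setOf_eq] at hz ha hb
  push_neg at hz
  have key : ∀ c, (Gdelta D δ).Reachable x c ∨ (Gdelta D δ).Reachable y c → D.d z c = δ := by
    rintro c (hc | hc)
    · exact d_comp D δ hc hz.1
    · exact d_comp D δ hc hz.2
  rw [key a ha, key b hb]

lemma mmodule_union (D : Dissim X) {M1 M2 : Set X} (h1 : IsMmodule D M1)
    (h2 : IsMmodule D M2) {t : X} (ht1 : t ∈ M1) (ht2 : t ∈ M2) :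
    IsMmodule D (M1 ∪ M2) := by
  intro z hz a ha b hb
  have hz1 : z ∉ M1 := fun h => hz (Or.inl h)
  have hz2 : z ∉ M2 := fun h => hz (Or.inr h)
  have key : ∀ c ∈ M1 ∪ M2, D.d z c = D.d z t := by
    rintro c (hc | hc)
    · exact h1 z hz1 c hc t ht1
    · exact h2 z hz2 c hc t ht2
  rw [key a ha, key b hb]

lemma exists_outside [Nonempty X] (D : Dissim X) (δ : ℝ)
    (hnc : ¬ (Gdelta D δ).Connected) (x : X) :
    ∃ y, ¬ (Gdelta D δ).Reachable x y := by
  by_contra h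
  push_neg at h
  exact hnc ⟨fun a b => (h a).symm.trans (h b)⟩

/-- if G_δ is disconnected for some δ > 0, then the maximal mmodules
are exactly the complements of the connected components of G_δ; in particular
M_max is a copartition of X. -/
theorem stmt6 [Fintype X] [Nonempty X] (D : Dissim X)
    (δ : ℝ) (hδ : 0 < δ)
    (hnc : ¬ (Gdelta D δ).Connected) :
    MMax D = {M : Set X | ∃ C : Set X, IsCompOf (Gdelta D δ) C ∧ M = Cᶜ} ∧
    IsCopartition (MMax D) := by
  set G := Gdelta D δ with hG
  have hset : MMax D = {M : Set X | ∃ C : Set X, IsCompOf G C ∧ M = Cᶜ} := by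
    ext M
    constructor
    · rintro ⟨hM, hMu, hmax⟩
      obtain ⟨z, hz⟩ : ∃ z, z ∉ M := by
        by_contra h; push_neg at h
        exact hMu (Set.eq_univ_of_forall h)
      set C : Set X := {y | G.Reachable z y} with hC
      have hzC : z ∈ C := SimpleGraph.Reachable.refl z
      obtain ⟨y, hy⟩ := exists_outside D δ hnc z
      have hyC : y ∉ C := hy
      by_cases hint : ∃ t, t ∈ M ∧ t ∈ Cᶜ
      · -- M ∪ Cᶜ is an mmodule, so M ⊇ Cᶜ; also M ⊆ Cᶜ
        obtain ⟨t, ht1, ht2⟩ := hint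
        have hun : IsMmodule D (M ∪ Cᶜ) :=
          mmodule_union D hM (compl_comp_mmodule D δ z) ht1 ht2
        have hunne : M ∪ Cᶜ ≠ Set.univ := by
          intro h
          have : z ∈ M ∪ Cᶜ := h ▸ Set.mem_univ z
          rcases this with h' | h'
          · exact hz h'
          · exact h' hzC
        have heq : M = M ∪ Cᶜ := hmax _ hun hunne Set.subset_union_left
        have hCsub : Cᶜ ⊆ M := heq ▸ Set.subset_union_right
        have hMsub : M ⊆ Cᶜ := by
          intro w hw
          by_contra hwC
          simp only [Set.mem_compl_iff, Set.mem_setOf_eq, not_not, hC] at hwC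
          obtain ⟨p⟩ := hwC
          obtain ⟨u, hru, hu, v, hv, huv⟩ := boundary G M p hz hw
          have huC : u ∈ C := hru
          have hyM : y ∈ M := hCsub hyC
          have : D.d u v = D.d u y := hM u hu v hv y hyM
          have hδ' : D.d u y = δ := by
            rw [D.symm]
            exact d_comp D δ huC hy
          exact huv.2 (this.trans hδ')
        exact ⟨C, ⟨z, rfl⟩, Set.Subset.antisymm hMsub hCsub⟩
      · -- M ⊆ C, so M = C by maximality
        push_neg at hint
        have hMC : M ⊆ C := by
          intro w hw
          by_contra h
          exact hint w hw h
        have hCne : C ≠ Set.univ := by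
          intro h
          exact hyC (h ▸ Set.mem_univ y)
        have heq : M = C := hmax C (comp_mmodule D δ z) hCne hMC
        set C' : Set X := {w | G.Reachable y w} with hC'
        have hC'sub : C' ⊆ Cᶜ := by
          intro a ha hac
          exact hy (hac.trans ha.symm)
        by_cases hcc : Cᶜ ⊆ C'
        · refine ⟨C', ⟨y, rfl⟩, ?_⟩
          have : C' = Cᶜ := Set.Subset.antisymm hC'sub hcc
          rw [heq, this, compl_compl]
        · obtain ⟨w, hw1, hw2⟩ : ∃ w, w ∈ Cᶜ ∧ w ∉ C' := by
            by_contra h; push_neg at h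
            exact hcc fun a ha => h a ha
          have hun : IsMmodule D (C ∪ C') := comp_union_mmodule D δ z y
          have hunne : C ∪ C' ≠ Set.univ := by
            intro h
            have : w ∈ C ∪ C' := h ▸ Set.mem_univ w
            rcases this with h' | h'
            · exact hw1 h'
            · exact hw2 h'
          have : M = C ∪ C' := hmax _ hun hunne (heq ▸ Set.subset_union_left)
          exfalso
          have hyM : y ∈ M := by
            rw [this]
            exact Or.inr (SimpleGraph.Reachable.refl y)
          exact hyC (hMC hyM)
    · rintro ⟨C, ⟨x, rfl⟩, rfl⟩
      set C : Set X := {y | G.Reachable x y} with hC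
      have hxC : x ∈ C := SimpleGraph.Reachable.refl x
      obtain ⟨y, hy⟩ := exists_outside D δ hnc x
      refine ⟨compl_comp_mmodule D δ x, ?_, ?_⟩
      · intro h
        have : x ∈ Cᶜ := h ▸ Set.mem_univ x
        exact this hxC
      · intro M' hM' hM'u hsub
        obtain ⟨z, hz⟩ : ∃ z, z ∉ M' := by
          by_contra h; push_neg at h
          exact hM'u (Set.eq_univ_of_forall h)
        have hzC : z ∈ C := by
          by_contra h
          exact hz (hsub h)
        refine Set.Subset.antisymm hsub ?_
        intro w hw
        by_contra hwC
        simp only [Set.mem_compl_iff, Set.mem_setOf_eq, not_not, hC] at hwC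
        have hrzw : G.Reachable z w := hzC.symm.trans hwC
        obtain ⟨p⟩ := hrzw
        obtain ⟨u, hru, hu, v, hv, huv⟩ := boundary G M' p hz hw
        have huC : u ∈ C := hzC.trans hru
        have hyM : y ∈ M' := hsub hy
        have : D.d u v = D.d u y := hM' u hu v hv y hyM
        have hδ' : D.d u y = δ := by
          rw [D.symm]
          exact d_comp D δ huC hy
        exact huv.2 (this.trans hδ')
  refine ⟨hset, ?_⟩
  have himg : (fun M => Mᶜ) '' (MMax D) = {C | IsCompOf G C} := by
    rw [hset]
    ext A
    constructor
    · rintro ⟨M, ⟨C, hCc, rfl⟩, rfl⟩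
      simpa using hCc
    · intro hA
      exact ⟨Aᶜ, ⟨A, hA, rfl⟩, compl_compl A⟩
  rw [IsCopartition, himg]
  refine ⟨?_, ?_, ?_⟩
  · rintro A ⟨x, rfl⟩
    exact ⟨x, SimpleGraph.Reachable.refl x⟩
  · rintro A ⟨x1, rfl⟩ B ⟨x2, rfl⟩ hne
    rw [Set.disjoint_left]
    intro t ht1 ht2
    apply hne
    ext a
    simp only [Set.mem_setOf_eq] at ht1 ht2 ⊢
    exact ⟨fun h => ht2.trans (ht1.symm.trans h), fun h => ht1.trans (ht2.symm.trans h)⟩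
  · ext a
    simp only [Set.mem_sUnion, Set.mem_univ, iff_true]
    exact ⟨{y | G.Reachable a y}, ⟨a, rfl⟩, SimpleGraph.Reachable.refl a⟩
end

section
/- Let (X,d) be a non-connected Robinson space with d(x,y) > 0 for all distinct x,y ∈ X, and let S_0 be a connected component of G_{δ*} with diam(S_0) > δ* (a large δ*-mmodule). Then: (i) there is a bipartition S_0 = S_* ∪ S^* of S_0 into two blocks of (X,d), and this bipartition is unique up to swapping S_* and S^*; (ii) diam(S_*) ≤ δ* and diam(S^*) ≤ δ*; (iii) d(x,y) ≥ δ* for all x ∈ S_* and y ∈ S^*; (iv) if there exists δ > 0 such that the graph G_δ restricted to S_0 is not connected, then δ > δ* and the connected components of G_δ restricted to S_0 are exactly S_* and S^*. -/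
variable {X : Type*}

section Aux9

variable {X : Type*}

def GoodPair9 (D : Dissim X) (δs : ℝ) (S₀ A B : Set X) : Prop :=
  A.Nonempty ∧ B.Nonempty ∧ Disjoint A B ∧ A ∪ B = S₀ ∧
  (∀ x ∈ A, ∀ y ∈ A, D.d x y ≤ δs) ∧ (∀ x ∈ B, ∀ y ∈ B, D.d x y ≤ δs) ∧
  (∀ x ∈ A, ∀ y ∈ B, δs ≤ D.d x y)

lemma aux9_cross (D : Dissim X) (δs : ℝ) (S₀ : Set X) (x₀ : X)
    (hS : S₀ = {y | (Gdelta D δs).Reachable x₀ y}) :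
    ∀ x ∈ S₀, ∀ z, z ∉ S₀ → D.d x z = δs := by
  intro x hx z hz
  rw [hS] at hx hz
  by_contra hne
  have hxz : x ≠ z := by rintro rfl; exact hz hx
  exact hz (hx.trans (SimpleGraph.Adj.reachable (⟨hxz, hne⟩ : (Gdelta D δs).Adj x z)))

lemma aux9_reach_ind (D : Dissim X) (δs : ℝ) (S₀ : Set X) (x₀ : X)
    (hS : S₀ = {y | (Gdelta D δs).Reachable x₀ y})
    (P : X → Prop)
    (step : ∀ a b, a ∈ S₀ → b ∈ S₀ → (Gdelta D δs).Adj a b → P a → P b) :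
    ∀ x ∈ S₀, ∀ y ∈ S₀, P x → P y := by
  have key : ∀ a b : X, (Gdelta D δs).Walk a b → a ∈ S₀ → P a → P b := by
    intro a b w
    induction w with
    | nil => exact fun _ h => h
    | @cons u v c h p ih =>
      intro hu hPu
      have hv : v ∈ S₀ := by
        rw [hS] at hu ⊢
        exact hu.trans h.reachable
      exact ih hv (step u v hu hv h hPu)
  intro x hx y hy hPx
  have hr : (Gdelta D δs).Reachable x y := by
    rw [hS] at hx hy
    exact hx.symm.trans hy
  obtain ⟨w⟩ := hr
  exact key x y w hx hPx

lemma aux9_between (D : Dissim X) (δs : ℝ) (S₀ : Set X)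
    (hcross : ∀ x ∈ S₀, ∀ z, z ∉ S₀ → D.d x z = δs)
    (lt : X → X → Prop) (hsto : IsStrictTotalOrder X lt) (hc : Compatible D lt)
    {a b : X} (ha : a ∈ S₀) (hb : b ∈ S₀) (hab : δs < D.d a b) (hlt : lt a b)
    {z : X} (hz : z ∉ S₀) : lt a z ∧ lt z b := by
  haveI := hsto
  have hza : z ≠ a := fun h => hz (h ▸ ha)
  have hzb : z ≠ b := fun h => hz (h ▸ hb)
  constructor
  · rcases trichotomous_of lt z a with h | h | h
    · have h2 := (hc z a b h hlt).2
      have h3 : D.d z b = δs := (D.symm z b).trans (hcross b hb z hz)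
      linarith
    · exact absurd h hza
    · exact h
  · rcases trichotomous_of lt z b with h | h | h
    · exact h
    · exact absurd h.symm hzb.symm
    · have h2 := (hc a b z hlt h).1
      have h3 : D.d a z = δs := hcross a ha z hz
      linarith

lemma aux9_side (D : Dissim X) (δs : ℝ) (S₀ : Set X) (x₀ : X)
    (hS : S₀ = {y | (Gdelta D δs).Reachable x₀ y}) (hδ : 0 < δs)
    (lt : X → X → Prop) (hsto : IsStrictTotalOrder X lt) (hc : Compatible D lt)
    {a b : X} (ha : a ∈ S₀) (hb : b ∈ S₀) (hab : δs < D.d a b) :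
    ∀ x ∈ S₀, (∀ z, z ∉ S₀ → lt x z) ∨ (∀ z, z ∉ S₀ → lt z x) := by
  haveI := hsto
  have hcross := aux9_cross D δs S₀ x₀ hS
  intro x hx
  by_contra hcon
  push_neg at hcon
  obtain ⟨⟨z1, hz1, hz1x⟩, ⟨z2, hz2, hxz2⟩⟩ := hcon
  -- z1 ∉ S₀ with lt z1 x, z2 ∉ S₀ with lt x z2
  have hz1lt : lt z1 x := by
    rcases trichotomous_of lt z1 x with h | h | h
    · exact h
    · exact absurd h (fun h' => hz1 (h' ▸ hx))
    · exact absurd h hz1x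
  have hxlt : lt x z2 := by
    rcases trichotomous_of lt x z2 with h | h | h
    · exact h
    · exact absurd h.symm (fun h' => hz2 (h' ▸ hx))
    · exact absurd h hxz2
  -- orient the big pair
  have hne : a ≠ b := by
    rintro rfl
    rw [D.self] at hab; linarith
  have asymm : ∀ u v : X, lt u v → lt v u → False := by
    intro u v h1 h2
    exact irrefl_of lt u (trans_of lt h1 h2)
  obtain ⟨a', b', ha', hb', hab', hlt'⟩ :
      ∃ a' b', a' ∈ S₀ ∧ b' ∈ S₀ ∧ δs < D.d a' b' ∧ lt a' b' := by
    rcases trichotomous_of lt a b with h | h | h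
    · exact ⟨a, b, ha, hb, hab, h⟩
    · exact absurd h hne
    · exact ⟨b, a, hb, ha, by rw [D.symm]; exact hab, h⟩
  -- propagate "strictly between z1 and z2" from x to a'
  have key := aux9_reach_ind D δs S₀ x₀ hS (fun y => lt z1 y ∧ lt y z2) ?_ x hx a' ha' ⟨hz1lt, hxlt⟩
  · exact asymm a' z1 (aux9_between D δs S₀ hcross lt hsto hc ha' hb' hab' hlt' hz1).1 key.1
  · rintro u v hu hv ⟨hnuv, hduv⟩ ⟨h1, h2⟩
    rcases lt_or_gt_of_ne hduv with hlt2 | hgt2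
    · constructor
      · rcases trichotomous_of lt z1 v with h | h | h
        · exact h
        · exact absurd h (fun h' => hz1 (h' ▸ hv))
        · exfalso
          have h4 := (hc v z1 u h h1).1
          have h5 : D.d v z1 = δs := hcross v hv z1 hz1
          have h6 : D.d v u = D.d u v := D.symm v u
          linarith
      · rcases trichotomous_of lt v z2 with h | h | h
        · exact h
        · exact absurd h.symm (fun h' => hz2 (h' ▸ hv))
        · exfalso
          have h4 := (hc u z2 v h2 h).1
          have h5 : D.d u z2 = δs := hcross u hu z2 hz2
          linarith
    · exfalso
      rcases trichotomous_of lt u v with h | h | h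
      · exact asymm u z1 (aux9_between D δs S₀ hcross lt hsto hc hu hv hgt2 h hz1).1 h1
      · exact hnuv h
      · have hgt3 : δs < D.d v u := by rw [D.symm]; exact hgt2
        exact asymm z2 u (aux9_between D δs S₀ hcross lt hsto hc hv hu hgt3 h hz2).2 h2

lemma aux9_good (D : Dissim X) (δs : ℝ) (S₀ : Set X) (x₀ : X)
    (hS : S₀ = {y | (Gdelta D δs).Reachable x₀ y}) (hδ : 0 < δs)
    (lt : X → X → Prop) (hsto : IsStrictTotalOrder X lt) (hc : Compatible D lt)
    {a b : X} (ha : a ∈ S₀) (hb : b ∈ S₀) (hab : δs < D.d a b)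
    {z₀ : X} (hz₀ : z₀ ∉ S₀) :
    GoodPair9 D δs S₀ {x ∈ S₀ | ∀ z, z ∉ S₀ → lt x z} {x ∈ S₀ | ∀ z, z ∉ S₀ → lt z x} := by
  haveI := hsto
  have hcross := aux9_cross D δs S₀ x₀ hS
  have asymm : ∀ u v : X, lt u v → lt v u → False := by
    intro u v h1 h2
    exact irrefl_of lt u (trans_of lt h1 h2)
  have hne : a ≠ b := by
    rintro rfl
    rw [D.self] at hab; linarith
  obtain ⟨a', b', ha', hb', hab', hlt'⟩ :
      ∃ a' b', a' ∈ S₀ ∧ b' ∈ S₀ ∧ δs < D.d a' b' ∧ lt a' b' := by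
    rcases trichotomous_of lt a b with h | h | h
    · exact ⟨a, b, ha, hb, hab, h⟩
    · exact absurd h hne
    · exact ⟨b, a, hb, ha, by rw [D.symm]; exact hab, h⟩
  refine ⟨⟨a', ha', fun z hz => (aux9_between D δs S₀ hcross lt hsto hc ha' hb' hab' hlt' hz).1⟩,
    ⟨b', hb', fun z hz => (aux9_between D δs S₀ hcross lt hsto hc ha' hb' hab' hlt' hz).2⟩,
    ?_, ?_, ?_, ?_, ?_⟩
  · rw [Set.disjoint_left]
    rintro x ⟨hx, hL⟩ ⟨-, hR⟩
    exact asymm x z₀ (hL z₀ hz₀) (hR z₀ hz₀)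
  · apply Set.eq_of_subset_of_subset
    · rintro x (⟨hx, -⟩ | ⟨hx, -⟩) <;> exact hx
    · intro x hx
      rcases aux9_side D δs S₀ x₀ hS hδ lt hsto hc ha hb hab x hx with h | h
      · exact Or.inl ⟨hx, h⟩
      · exact Or.inr ⟨hx, h⟩
  · rintro x ⟨hx, hL⟩ y ⟨hy, hL'⟩
    by_cases hxy : x = y
    · rw [hxy, D.self]; exact hδ.le
    · rcases trichotomous_of lt x y with h | h | h
      · have h4 := (hc x y z₀ h (hL' z₀ hz₀)).1
        have h5 : D.d x z₀ = δs := hcross x hx z₀ hz₀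
        linarith
      · exact absurd h hxy
      · have h4 := (hc y x z₀ h (hL z₀ hz₀)).1
        have h5 : D.d y z₀ = δs := hcross y hy z₀ hz₀
        have h6 : D.d x y = D.d y x := D.symm x y
        linarith
  · rintro x ⟨hx, hR⟩ y ⟨hy, hR'⟩
    by_cases hxy : x = y
    · rw [hxy, D.self]; exact hδ.le
    · rcases trichotomous_of lt x y with h | h | h
      · have h4 := (hc z₀ x y (hR z₀ hz₀) h).2
        have h5 : D.d z₀ y = δs := (D.symm z₀ y).trans (hcross y hy z₀ hz₀)
        linarith
      · exact absurd h hxy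
      · have h4 := (hc z₀ y x (hR' z₀ hz₀) h).2
        have h5 : D.d z₀ x = δs := (D.symm z₀ x).trans (hcross x hx z₀ hz₀)
        have h6 : D.d x y = D.d y x := D.symm x y
        linarith
  · rintro x ⟨hx, hL⟩ y ⟨hy, hR⟩
    have h4 := (hc x z₀ y (hL z₀ hz₀) (hR z₀ hz₀)).1
    have h5 : D.d x z₀ = δs := hcross x hx z₀ hz₀
    linarith

lemma aux9_intervalL (D : Dissim X) (S₀ : Set X)
    (lt : X → X → Prop) (hsto : IsStrictTotalOrder X lt) :
    IsInterval lt {x ∈ S₀ | ∀ z, z ∉ S₀ → lt x z} := by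
  haveI := hsto
  have asymm : ∀ u v : X, lt u v → lt v u → False := fun u v h1 h2 =>
    irrefl_of lt u (trans_of lt h1 h2)
  rintro a b c hab hbc ⟨haS, haL⟩ ⟨hcS, hcL⟩
  have hbS : b ∈ S₀ := by
    by_contra hb
    exact asymm b c hbc (hcL b hb)
  exact ⟨hbS, fun z hz => trans_of lt hbc (hcL z hz)⟩

lemma aux9_intervalR (D : Dissim X) (S₀ : Set X)
    (lt : X → X → Prop) (hsto : IsStrictTotalOrder X lt) :
    IsInterval lt {x ∈ S₀ | ∀ z, z ∉ S₀ → lt z x} := by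
  haveI := hsto
  have asymm : ∀ u v : X, lt u v → lt v u → False := fun u v h1 h2 =>
    irrefl_of lt u (trans_of lt h1 h2)
  rintro a b c hab hbc ⟨haS, haR⟩ ⟨hcS, hcR⟩
  have hbS : b ∈ S₀ := by
    by_contra hb
    exact asymm a b hab (haR b hb)
  exact ⟨hbS, fun z hz => trans_of lt (haR z hz) hab⟩

lemma aux9_unique (D : Dissim X) (δs : ℝ) (S₀ : Set X) (x₀ : X)
    (hS : S₀ = {y | (Gdelta D δs).Reachable x₀ y})
    {a b : X} (ha : a ∈ S₀) (hb : b ∈ S₀) (hab : δs < D.d a b)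
    {A B A' B' : Set X} (h1 : GoodPair9 D δs S₀ A B) (h2 : GoodPair9 D δs S₀ A' B') :
    (A = A' ∧ B = B') ∨ (A = B' ∧ B = A') := by
  -- basic membership facts from a good pair
  have key : ∀ (C E : Set X), GoodPair9 D δs S₀ C E → ∀ u ∈ S₀, ∀ v ∈ S₀,
      (D.d u v < δs → (u ∈ C ↔ v ∈ C)) ∧ (δs < D.d u v → (u ∈ C ↔ v ∉ C)) := by
    rintro C E ⟨-, -, hdisj, huni, hCC, hEE, hCE⟩ u hu v hv
    have hmemu : u ∈ C ∨ u ∈ E := by rw [← huni] at hu; exact hu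
    have hmemv : v ∈ C ∨ v ∈ E := by rw [← huni] at hv; exact hv
    have hdj := Set.disjoint_left.mp hdisj
    constructor
    · intro hlt
      constructor
      · intro huC
        rcases hmemv with h | h
        · exact h
        · exact absurd (hCE u huC v h) (by linarith)
      · intro hvC
        rcases hmemu with h | h
        · exact h
        · exfalso
          have := hCE v hvC u h
          have h6 : D.d v u = D.d u v := D.symm v u
          linarith
    · intro hgt
      constructor
      · intro huC hvC
        exact absurd (hCC u huC v hvC) (by linarith)
      · intro hvnC
        have hvE : v ∈ E := by
          rcases hmemv with h | h
          · exact absurd h hvnC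
          · exact h
        rcases hmemu with h | h
        · exact h
        · exact absurd (hEE u h v hvE) (by linarith)
  have subA : A ⊆ S₀ := by rw [← h1.2.2.2.1]; exact Set.subset_union_left
  have subB : B ⊆ S₀ := by rw [← h1.2.2.2.1]; exact Set.subset_union_right
  have subA' : A' ⊆ S₀ := by rw [← h2.2.2.2.1]; exact Set.subset_union_left
  have subB' : B' ⊆ S₀ := by rw [← h2.2.2.2.1]; exact Set.subset_union_right
  have main : ∀ x ∈ S₀, ((x ∈ A ↔ x ∈ A') ↔ (a ∈ A ↔ a ∈ A')) := by
    intro x hx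
    refine aux9_reach_ind D δs S₀ x₀ hS
      (fun y => ((y ∈ A ↔ y ∈ A') ↔ (a ∈ A ↔ a ∈ A'))) ?_ a ha x hx Iff.rfl
    rintro u v hu hv ⟨hnuv, hduv⟩ hPu
    rcases lt_or_gt_of_ne hduv with hlt | hgt
    · have k1 := ((key A B h1 u hu v hv).1 hlt)
      have k2 := ((key A' B' h2 u hu v hv).1 hlt)
      exact (iff_congr k1 k2).symm.trans hPu
    · have k1 := ((key A B h1 u hu v hv).2 hgt)
      have k2 := ((key A' B' h2 u hu v hv).2 hgt)
      have e1 : ((v ∈ A ↔ v ∈ A') ↔ (v ∉ A ↔ v ∉ A')) := not_iff_not.symm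
      exact (e1.trans (iff_congr k1 k2).symm).trans hPu
  have facts : ∀ x ∈ S₀, (x ∈ A ∨ x ∈ B) ∧ ¬(x ∈ A ∧ x ∈ B) ∧
      (x ∈ A' ∨ x ∈ B') ∧ ¬(x ∈ A' ∧ x ∈ B') := by
    intro x hx
    refine ⟨?_, ?_, ?_, ?_⟩
    · rw [← h1.2.2.2.1] at hx; exact hx
    · rintro ⟨p, q⟩; exact Set.disjoint_left.mp h1.2.2.1 p q
    · rw [← h2.2.2.2.1] at hx; exact hx
    · rintro ⟨p, q⟩; exact Set.disjoint_left.mp h2.2.2.1 p q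
  have dicho : (∀ x ∈ S₀, (x ∈ A ↔ x ∈ A')) ∨ (∀ x ∈ S₀, (x ∈ A ↔ x ∉ A')) := by
    by_cases hcc : a ∈ A ↔ a ∈ A'
    · left; intro x hx; exact (main x hx).mpr hcc
    · right; intro x hx; have hm := main x hx; tauto
  rcases dicho with heq | hneq
  · left
    constructor
    · ext x
      constructor <;> intro hmem
      · exact (heq x (subA hmem)).mp hmem
      · exact (heq x (subA' hmem)).mpr hmem
    · ext x
      constructor <;> intro hmem
      · have hx := subB hmem
        have hf := facts x hx
        have he := heq x hx
        tauto
      · have hx := subB' hmem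
        have hf := facts x hx
        have he := heq x hx
        tauto
  · right
    constructor
    · ext x
      constructor <;> intro hmem
      · have hx := subA hmem
        have hf := facts x hx
        have he := hneq x hx
        tauto
      · have hx := subB' hmem
        have hf := facts x hx
        have he := hneq x hx
        tauto
    · ext x
      constructor <;> intro hmem
      · have hx := subB hmem
        have hf := facts x hx
        have he := hneq x hx
        tauto
      · have hx := subA' hmem
        have hf := facts x hx
        have he := hneq x hx
        tauto
end Aux9

/-- properties of a large δ*-mmodule S₀ of a non-connected Robinson
space: unique bipartition into two blocks, both of diameter at most δ*, with
distances at least δ* across, and the components of any disconnecting G_δ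
restricted to S₀ are exactly the two parts (and such δ exceeds δ*). -/
theorem stmt9 [Fintype X] [Nonempty X] (D : Dissim X)
    (hpos : ∀ x y : X, x ≠ y → 0 < D.d x y)
    (hRob : Robinson D)
    (δstar : ℝ)
    (hls : IsLeast {δ : ℝ | 0 < δ ∧ (Gle D δ).Connected} δstar)
    (hnc : ¬ (Gdelta D δstar).Connected)
    (S₀ : Set X) (hS₀ : IsCompOf (Gdelta D δstar) S₀)
    (hlarge : δstar < diam D S₀) :
    ∃ Sb St : Set X,
      (Sb.Nonempty ∧ St.Nonempty ∧ Disjoint Sb St ∧ Sb ∪ St = S₀ ∧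
        IsBlock D Sb ∧ IsBlock D St) ∧
      (∀ Sb' St' : Set X,
        (Sb'.Nonempty ∧ St'.Nonempty ∧ Disjoint Sb' St' ∧ Sb' ∪ St' = S₀ ∧
          IsBlock D Sb' ∧ IsBlock D St') →
        (Sb' = Sb ∧ St' = St) ∨ (Sb' = St ∧ St' = Sb)) ∧
      diam D Sb ≤ δstar ∧ diam D St ≤ δstar ∧
      (∀ x ∈ Sb, ∀ y ∈ St, δstar ≤ D.d x y) ∧
      (∀ δ : ℝ, 0 < δ → ¬ ConnectedWithin (Gdelta D δ) S₀ →
        δstar < δ ∧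
        ∀ C : Set X, IsCompWithin (Gdelta D δ) S₀ C ↔ (C = Sb ∨ C = St)) := by

  obtain ⟨x₀, hS⟩ := hS₀
  have hδpos : 0 < δstar := hls.1.1
  have hcross := aux9_cross D δstar S₀ x₀ hS
  obtain ⟨z₀, hz₀⟩ : ∃ z, z ∉ S₀ := by
    by_contra h
    push_neg at h
    apply hnc
    rw [SimpleGraph.connected_iff]
    refine ⟨fun u v => ?_, ‹Nonempty X›⟩
    have hu : (Gdelta D δstar).Reachable x₀ u := by have := h u; rwa [hS] at this
    have hv : (Gdelta D δstar).Reachable x₀ v := by have := h v; rwa [hS] at this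
    exact hu.symm.trans hv
  obtain ⟨a, ha, b, hb, hab⟩ : ∃ a ∈ S₀, ∃ b ∈ S₀, δstar < D.d a b := by
    by_contra h
    push_neg at h
    have hle : diam D S₀ ≤ δstar := by
      apply Real.sSup_le ?_ hδpos.le
      rintro v hv
      rw [Set.mem_image2] at hv
      obtain ⟨p, hp, q, hq, rfl⟩ := hv
      exact h p hp q hq
    linarith
  obtain ⟨lt₀, hsto₀, hc₀⟩ := hRob
  set Sb := {x ∈ S₀ | ∀ z, z ∉ S₀ → lt₀ x z} with hSbdef
  set St := {x ∈ S₀ | ∀ z, z ∉ S₀ → lt₀ z x} with hStdef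
  have hgp : GoodPair9 D δstar S₀ Sb St :=
    aux9_good D δstar S₀ x₀ hS hδpos lt₀ hsto₀ hc₀ ha hb hab hz₀
  obtain ⟨hSbne, hStne, hdisj, huni, hbb, htt, hbt⟩ := hgp
  have hgp : GoodPair9 D δstar S₀ Sb St := ⟨hSbne, hStne, hdisj, huni, hbb, htt, hbt⟩
  have hd := Set.disjoint_left.mp hdisj
  have hsubB : Sb ⊆ S₀ := by rw [← huni]; exact Set.subset_union_left
  have hsubT : St ⊆ S₀ := by rw [← huni]; exact Set.subset_union_right
  have hblockB : IsBlock D Sb := by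
    rintro lt' ⟨hsto', hc'⟩
    have hgp' := aux9_good D δstar S₀ x₀ hS hδpos lt' hsto' hc' ha hb hab hz₀
    rcases aux9_unique D δstar S₀ x₀ hS ha hb hab hgp hgp' with ⟨hA, -⟩ | ⟨hA, -⟩
    · rw [hA]; exact aux9_intervalL D S₀ lt' hsto'
    · rw [hA]; exact aux9_intervalR D S₀ lt' hsto'
  have hblockT : IsBlock D St := by
    rintro lt' ⟨hsto', hc'⟩
    have hgp' := aux9_good D δstar S₀ x₀ hS hδpos lt' hsto' hc' ha hb hab hz₀
    rcases aux9_unique D δstar S₀ x₀ hS ha hb hab hgp hgp' with ⟨-, hB⟩ | ⟨-, hB⟩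
    · rw [hB]; exact aux9_intervalR D S₀ lt' hsto'
    · rw [hB]; exact aux9_intervalL D S₀ lt' hsto'
  refine ⟨Sb, St, ⟨hSbne, hStne, hdisj, huni, hblockB, hblockT⟩, ?_, ?_, ?_, hbt, ?_⟩
  · -- uniqueness of the block bipartition
    rintro Sb' St' ⟨hne', htne', hdisj', huni', hbl', htl'⟩
    have hsplit : ∀ T : Set X, T ⊆ S₀ → IsInterval lt₀ T → T ⊆ Sb ∨ T ⊆ St := by
      intro T hTs hTi
      by_contra h
      push_neg at h
      obtain ⟨h1, h2⟩ := h
      rw [Set.not_subset] at h1 h2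
      obtain ⟨p, hp, hpb⟩ := h1
      obtain ⟨q, hq, hqt⟩ := h2
      have hpSt : p ∈ St := by
        have : p ∈ Sb ∪ St := by rw [huni]; exact hTs hp
        rcases this with h | h
        · exact absurd h hpb
        · exact h
      have hqSb : q ∈ Sb := by
        have : q ∈ Sb ∪ St := by rw [huni]; exact hTs hq
        rcases this with h | h
        · exact h
        · exact absurd h hqt
      have hz₀T : z₀ ∈ T := hTi q z₀ p (hqSb.2 z₀ hz₀) (hpSt.2 z₀ hz₀) hq hp
      exact hz₀ (hTs hz₀T)
    have hIb := hbl' lt₀ ⟨hsto₀, hc₀⟩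
    have hIt := htl' lt₀ ⟨hsto₀, hc₀⟩
    have hsub' : Sb' ⊆ S₀ := by rw [← huni']; exact Set.subset_union_left
    have htsub' : St' ⊆ S₀ := by rw [← huni']; exact Set.subset_union_right
    have hd' := Set.disjoint_left.mp hdisj'
    have hempty : ∀ U : Set X, U.Nonempty → U ⊆ S₀ → Disjoint U U → False := by
      intro U ⟨u, hu⟩ _ hUU
      exact Set.disjoint_left.mp hUU hu hu
    rcases hsplit Sb' hsub' hIb with h1 | h1 <;> rcases hsplit St' htsub' hIt with h2 | h2
    · exfalso
      obtain ⟨t, ht⟩ := hStne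
      have : t ∈ Sb' ∪ St' := by rw [huni']; exact hsubT ht
      rcases this with h | h
      · exact hd (h1 h) ht
      · exact hd (h2 h) ht
    · left
      constructor
      · apply Set.eq_of_subset_of_subset h1
        intro x hx
        have : x ∈ Sb' ∪ St' := by rw [huni']; exact hsubB hx
        rcases this with h | h
        · exact h
        · exact (hd hx (h2 h)).elim
      · apply Set.eq_of_subset_of_subset h2
        intro x hx
        have : x ∈ Sb' ∪ St' := by rw [huni']; exact hsubT hx
        rcases this with h | h
        · exact (hd (h1 h) hx).elim
        · exact h
    · right
      constructor
      · apply Set.eq_of_subset_of_subset h1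
        intro x hx
        have : x ∈ Sb' ∪ St' := by rw [huni']; exact hsubT hx
        rcases this with h | h
        · exact h
        · exact (hd (h2 h) hx).elim
      · apply Set.eq_of_subset_of_subset h2
        intro x hx
        have : x ∈ Sb' ∪ St' := by rw [huni']; exact hsubB hx
        rcases this with h | h
        · exact (hd hx (h1 h)).elim
        · exact h
    · exfalso
      obtain ⟨t, ht⟩ := hSbne
      have : t ∈ Sb' ∪ St' := by rw [huni']; exact hsubB ht
      rcases this with h | h
      · exact hd ht (h1 h)
      · exact hd ht (h2 h)
  · apply Real.sSup_le ?_ hδpos.le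
    rintro v hv
    rw [Set.mem_image2] at hv
    obtain ⟨p, hp, q, hq, rfl⟩ := hv
    exact hbb p hp q hq
  · apply Real.sSup_le ?_ hδpos.le
    rintro v hv
    rw [Set.mem_image2] at hv
    obtain ⟨p, hp, q, hq, rfl⟩ := hv
    exact htt p hp q hq
  · intro δ hδp hncw
    have hSne : S₀.Nonempty := ⟨a, ha⟩
    have hgt : δstar < δ := by
      rcases lt_trichotomy δ δstar with h | h | h
      · exfalso
        apply hncw
        refine ⟨hSne, ?_⟩
        have adjBT : ∀ p ∈ Sb, ∀ q ∈ St, ((Gdelta D δ).restrictTo S₀).Adj p q := by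
          intro p hp q hq
          have hpq : p ≠ q := fun h' => hd hp (h' ▸ hq)
          have hge : δstar ≤ D.d p q := hbt p hp q hq
          exact ⟨hsubB hp, hsubT hq, hpq, fun h' => by rw [h'] at hge; linarith⟩
        intro x hx y hy
        have hx' : x ∈ Sb ∪ St := by rw [huni]; exact hx
        have hy' : y ∈ Sb ∪ St := by rw [huni]; exact hy
        rcases hx' with h1 | h1 <;> rcases hy' with h2 | h2
        · by_cases hxy : x = y
          · rw [hxy]
          · obtain ⟨w, hw⟩ := hStne
            exact ((adjBT x h1 w hw).reachable).trans ((adjBT y h2 w hw).reachable).symm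
        · exact (adjBT x h1 y h2).reachable
        · exact ((adjBT y h2 x h1).reachable).symm
        · by_cases hxy : x = y
          · rw [hxy]
          · obtain ⟨w, hw⟩ := hSbne
            exact ((adjBT w hw x h1).reachable).symm.trans ((adjBT w hw y h2).reachable)
      · exfalso
        subst h
        apply hncw
        refine ⟨hSne, ?_⟩
        intro x hx y hy
        refine aux9_reach_ind D δ S₀ x₀ hS
          (fun y => ((Gdelta D δ).restrictTo S₀).Reachable x y) ?_ x hx y hy
          (SimpleGraph.Reachable.refl x)
        intro u v hu hv huv hr
        exact hr.trans (SimpleGraph.Adj.reachable ⟨hu, hv, huv⟩)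
      · exact h
    refine ⟨hgt, ?_⟩
    have hallcross : ∀ p ∈ Sb, ∀ q ∈ St, D.d p q = δ := by
      by_contra h
      push_neg at h
      obtain ⟨p, hp, q, hq, hpqne⟩ := h
      apply hncw
      refine ⟨hSne, ?_⟩
      have adjSame : ∀ u v : X, u ∈ S₀ → v ∈ S₀ → u ≠ v → D.d u v ≤ δstar →
          ((Gdelta D δ).restrictTo S₀).Adj u v := by
        intro u v hu hv hne2 hle
        exact ⟨hu, hv, hne2, fun h' => by rw [h'] at hle; linarith⟩
      have reachp : ∀ u ∈ Sb, ((Gdelta D δ).restrictTo S₀).Reachable u p := by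
        intro u hu
        by_cases h' : u = p
        · rw [h']
        · exact (adjSame u p (hsubB hu) (hsubB hp) h' (hbb u hu p hp)).reachable
      have reachq : ∀ u ∈ St, ((Gdelta D δ).restrictTo S₀).Reachable u q := by
        intro u hu
        by_cases h' : u = q
        · rw [h']
        · exact (adjSame u q (hsubT hu) (hsubT hq) h' (htt u hu q hq)).reachable
      have rpq : ((Gdelta D δ).restrictTo S₀).Reachable p q :=
        SimpleGraph.Adj.reachable
          ⟨hsubB hp, hsubT hq, fun h' => hd hp (h' ▸ hq), hpqne⟩
      intro x hx y hy
      have hx' : x ∈ Sb ∪ St := by rw [huni]; exact hx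
      have hy' : y ∈ Sb ∪ St := by rw [huni]; exact hy
      rcases hx' with h1 | h1 <;> rcases hy' with h2 | h2
      · exact (reachp x h1).trans (reachp y h2).symm
      · exact (reachp x h1).trans (rpq.trans (reachq y h2).symm)
      · exact (reachq x h1).trans (rpq.symm.trans (reachp y h2).symm)
      · exact (reachq x h1).trans (reachq y h2).symm
    have stayB : ∀ u v : X, ((Gdelta D δ).restrictTo S₀).Walk u v → u ∈ Sb → v ∈ Sb := by
      intro u v w
      induction w with
      | nil => exact fun h => h
      | @cons u' m _ h p ih =>
        intro hu
        obtain ⟨huS, hmS, hnum, hdnum⟩ := h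
        have hm : m ∈ Sb := by
          have : m ∈ Sb ∪ St := by rw [huni]; exact hmS
          rcases this with h' | h'
          · exact h'
          · exact absurd (hallcross u' hu m h') hdnum
        exact ih hm
    have stayT : ∀ u v : X, ((Gdelta D δ).restrictTo S₀).Walk u v → u ∈ St → v ∈ St := by
      intro u v w
      induction w with
      | nil => exact fun h => h
      | @cons u' m _ h p ih =>
        intro hu
        obtain ⟨huS, hmS, hnum, hdnum⟩ := h
        have hm : m ∈ St := by
          have : m ∈ Sb ∪ St := by rw [huni]; exact hmS
          rcases this with h' | h'
          · exfalso
            apply hdnum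
            rw [D.symm]
            exact hallcross m h' u' hu
          · exact h'
        exact ih hm
    have compB : ∀ x ∈ Sb, {y | ((Gdelta D δ).restrictTo S₀).Reachable x y} = Sb := by
      intro x hx
      apply Set.eq_of_subset_of_subset
      · intro y hy
        obtain ⟨w⟩ := hy
        exact stayB x y w hx
      · intro y hy
        by_cases h' : x = y
        · rw [← h']; exact SimpleGraph.Reachable.refl x
        · exact SimpleGraph.Adj.reachable
            ⟨hsubB hx, hsubB hy, h', fun h'' => by
              have := hbb x hx y hy; rw [h''] at this; linarith⟩
    have compT : ∀ x ∈ St, {y | ((Gdelta D δ).restrictTo S₀).Reachable x y} = St := by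
      intro x hx
      apply Set.eq_of_subset_of_subset
      · intro y hy
        obtain ⟨w⟩ := hy
        exact stayT x y w hx
      · intro y hy
        by_cases h' : x = y
        · rw [← h']; exact SimpleGraph.Reachable.refl x
        · exact SimpleGraph.Adj.reachable
            ⟨hsubT hx, hsubT hy, h', fun h'' => by
              have := htt x hx y hy; rw [h''] at this; linarith⟩
    intro C
    constructor
    · rintro ⟨x, hx, rfl⟩
      have : x ∈ Sb ∪ St := by rw [huni]; exact hx
      rcases this with h | h
      · exact Or.inl (compB x h)
      · exact Or.inr (compT x h)
    · rintro (rfl | rfl)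
      · obtain ⟨u, hu⟩ := hSbne
        exact ⟨u, hsubB hu, (compB u hu).symm⟩
      · obtain ⟨u, hu⟩ := hStne
        exact ⟨u, hsubT hu, (compT u hu).symm⟩
end

section
/- Let (X,d) be a non-connected Robinson space with d(x,y) > 0 for all distinct x,y ∈ X. Then every connected component S of G_{δ*} with diam(S) ≤ δ* is also a connected component of the graph G_{<δ*}. -/
variable {X : Type*}

/-- in a non-connected Robinson space, every δ*-mmodule (component of
G_{δ*}) of diameter at most δ* is also a connected component of G_{<δ*}. -/
theorem stmt13 [Fintype X] [Nonempty X] (D : Dissim X)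
    (hpos : ∀ x y : X, x ≠ y → 0 < D.d x y)
    (hRob : Robinson D)
    (δstar : ℝ)
    (hls : IsLeast {δ : ℝ | 0 < δ ∧ (Gle D δ).Connected} δstar)
    (hnc : ¬ (Gdelta D δstar).Connected)
    (S : Set X) (hS : IsCompOf (Gdelta D δstar) S)
    (hdiam : diam D S ≤ δstar) :
    IsCompOf (Glt D δstar) S := by
  obtain ⟨x, rfl⟩ := hS
  set S := {y | (Gdelta D δstar).Reachable x y} with hSdef
  have key : ∀ u v : X, u ∈ S → v ∈ S → D.d u v ≤ δstar := by
    intro u v hu hv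
    refine le_trans ?_ hdiam
    exact le_csSup (Set.Finite.bddAbove (Set.toFinite _)) (Set.mem_image2_of_mem hu hv)
  have step : ∀ u v, u ∈ S → (Gdelta D δstar).Adj u v → (Glt D δstar).Adj u v := by
    rintro u v hu ⟨hne, hd⟩
    have hv : v ∈ S := hu.trans (SimpleGraph.Adj.reachable ⟨hne, hd⟩)
    exact ⟨hne, lt_of_le_of_ne (key u v hu hv) hd⟩
  have walkto : ∀ u v (w : (Gdelta D δstar).Walk u v), u ∈ S →
      (Glt D δstar).Reachable u v := by
    intro u v w
    induction w with
    | nil => intro _; exact SimpleGraph.Reachable.refl _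
    | @cons a b c h p ih =>
        intro hu
        have hb : b ∈ S := hu.trans h.reachable
        exact ((step a b hu h).reachable).trans (ih hb)
  have hle : ∀ u v, (Glt D δstar).Adj u v → (Gdelta D δstar).Adj u v := by
    rintro u v ⟨hne, hd⟩
    exact ⟨hne, ne_of_lt hd⟩
  refine ⟨x, ?_⟩
  ext y
  simp only [Set.mem_setOf_eq]
  constructor
  · intro hy
    obtain ⟨w⟩ := hy
    exact walkto x y w (SimpleGraph.Reachable.refl x)
  · intro hy
    exact SimpleGraph.Reachable.mono hle hy
end
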